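/- Let m be a prime, and let G₁, G₂ be connected m-uniform hypergraphs on n₁, n₂ vertices whose incidence matrices over the field ℤ/mℤ have ranks r₁, r₂ respectively. Then s(G₁ □ G₂) = m^{(n₁−r₁)(n₂−r₂)−1}. -/

import Mathlib

open Matrix

/-- An `m`-uniform hypergraph on the vertex type `V`. -/
structure HG (m : ℕ) (V : Type) where
  edges : Finset (Finset V)
  uniform : ∀ e ∈ edges, e.card = m

namespace HG

variable {m : ℕ} {V : Type}

/-- Two vertices are adjacent if they are distinct and some edge contains both. -/
def adj (G : HG m V) (u v : V) : Prop :=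
  u ≠ v ∧ ∃ e ∈ G.edges, u ∈ e ∧ v ∈ e

/-- A hypergraph is connected if every two vertices are joined by a walk. -/
def Connected (G : HG m V) : Prop :=
  ∀ u v : V, Relation.ReflTransGen G.adj u v

/-- The incidence matrix of `G` over `ZMod m`: rows are edges, columns are vertices,
entry `1` iff the vertex lies in the edge. -/
def inc [DecidableEq V] (G : HG m V) : Matrix {e // e ∈ G.edges} V (ZMod m) :=
  Matrix.of fun e v => if v ∈ e.1 then 1 else 0

/-- The stabilizing index of `G` with respect to a base vertex `v₀`: the number of
solutions `x` of `In(G)·x = 0` over `ZMod m` with `x v₀ = 0`. -/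
noncomputable def stabIndex [DecidableEq V] [Fintype V] (G : HG m V) (v₀ : V) : ℕ :=
  Nat.card {x : V → ZMod m // G.inc.mulVec x = 0 ∧ x v₀ = 0}

/-- The cyclic index of `G`: the largest divisor `ℓ` of `m` such that `G` has an
`(m,ℓ)`-coloring, i.e. a vertex labelling whose sum on each edge is `m/ℓ` mod `m`. -/
noncomputable def cyclicIndex (G : HG m V) : ℕ :=
  sSup {ℓ : ℕ | ℓ ∣ m ∧ ∃ x : V → ZMod m, ∀ e ∈ G.edges, ∑ v ∈ e, x v = ((m / ℓ : ℕ) : ZMod m)}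

end HG

/-- The Cartesian product of two `m`-uniform hypergraphs: an edge is an edge of one
factor in one coordinate, with the other coordinate held constant. -/
def cartProd {m : ℕ} {V₁ V₂ : Type} [DecidableEq V₁] [DecidableEq V₂] [Fintype V₁] [Fintype V₂]
    (G₁ : HG m V₁) (G₂ : HG m V₂) : HG m (V₁ × V₂) where
  edges :=
    (Finset.univ : Finset V₁).biUnion
        (fun u => G₂.edges.image (Finset.image (fun v => (u, v)))) ∪
      (Finset.univ : Finset V₂).biUnion
        (fun v => G₁.edges.image (Finset.image (fun u => (u, v))))
  uniform := by
    intro e he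
    simp only [Finset.mem_union, Finset.mem_biUnion, Finset.mem_image, Finset.mem_univ,
      true_and] at he
    rcases he with ⟨u, f, hf, rfl⟩ | ⟨v, f, hf, rfl⟩
    · rw [Finset.card_image_of_injective _ (fun a b hab => by simpa using hab)]
      exact G₂.uniform f hf
    · rw [Finset.card_image_of_injective _ (fun a b hab => by simpa using hab)]
      exact G₁.uniform f hf

section Aux

variable {m : ℕ} {V : Type} [DecidableEq V] [Fintype V]

lemma sum_ite_helper (e : Finset V) (x : V → ZMod m) :
    (∑ v, (if v ∈ e then (1 : ZMod m) else 0) * x v) = ∑ v ∈ e, x v := by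
  rw [Finset.sum_congr rfl (fun v _ => by rw [ite_mul, one_mul, zero_mul]),
    Finset.sum_ite_mem, Finset.univ_inter]

lemma HG.mulVec_inc_eq_zero_iff (G : HG m V) (x : V → ZMod m) :
    G.inc.mulVec x = 0 ↔ ∀ e ∈ G.edges, ∑ v ∈ e, x v = 0 := by
  constructor
  · intro h e he
    have := congrFun h ⟨e, he⟩
    simp only [Matrix.mulVec, dotProduct, HG.inc, Matrix.of_apply, Pi.zero_apply] at this
    rwa [sum_ite_helper] at this
  · intro h
    funext e
    show (dotProduct _ x) = 0
    simp only [dotProduct, HG.inc, Matrix.of_apply]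
    rw [sum_ite_helper]
    exact h e.1 e.2

lemma HG.mulVec_inc_allones (G : HG m V) :
    G.inc.mulVec (fun _ => (1 : ZMod m)) = 0 := by
  rw [G.mulVec_inc_eq_zero_iff]
  intro e he
  rw [Finset.sum_const, G.uniform e he, nsmul_eq_mul, mul_one, ZMod.natCast_self]

lemma finrank_ker_mulVecLin {α : Type} [Fintype α] {n : ℕ} [Fact m.Prime]
    (A : Matrix α (Fin n) (ZMod m)) :
    A.rank + Module.finrank (ZMod m) (LinearMap.ker A.mulVecLin) = n := by
  have h := LinearMap.finrank_range_add_finrank_ker A.mulVecLin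
  rw [Module.finrank_fin_fun] at h
  exact h

lemma card_module_eq_pow_finrank [Fact m.Prime] (M : Type*) [AddCommGroup M]
    [Module (ZMod m) M] [Finite M] :
    Nat.card M = m ^ Module.finrank (ZMod m) M := by
  haveI : NeZero m := ⟨(Fact.out (p := m.Prime)).pos.ne'⟩
  haveI := Fintype.ofFinite M
  rw [Nat.card_eq_fintype_card, Module.card_eq_pow_finrank (K := ZMod m), ZMod.card]

lemma prod_mulVec_eq_zero_iff {m n₁ n₂ : ℕ} (G₁ : HG m (Fin n₁)) (G₂ : HG m (Fin n₂))
    (x : Fin n₁ × Fin n₂ → ZMod m) :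
    (cartProd G₁ G₂).inc.mulVec x = 0 ↔
      (∀ u, ∀ e ∈ G₂.edges, ∑ v ∈ e, x (u, v) = 0) ∧
      (∀ v, ∀ e ∈ G₁.edges, ∑ u ∈ e, x (u, v) = 0) := by
  rw [HG.mulVec_inc_eq_zero_iff]
  constructor
  · intro h
    constructor
    · intro u e he
      have hmem : e.image (fun v => (u, v)) ∈ (cartProd G₁ G₂).edges := by
        simp only [cartProd, Finset.mem_union, Finset.mem_biUnion, Finset.mem_image,
          Finset.mem_univ, true_and]
        exact Or.inl ⟨u, e, he, rfl⟩
      have := h _ hmem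
      rwa [Finset.sum_image (fun a _ b _ hab => by simpa using hab)] at this
    · intro v e he
      have hmem : e.image (fun u => (u, v)) ∈ (cartProd G₁ G₂).edges := by
        simp only [cartProd, Finset.mem_union, Finset.mem_biUnion, Finset.mem_image,
          Finset.mem_univ, true_and]
        exact Or.inr ⟨v, e, he, rfl⟩
      have := h _ hmem
      rwa [Finset.sum_image (fun a _ b _ hab => by simpa using hab)] at this
  · rintro ⟨h₂, h₁⟩ e he
    simp only [cartProd, Finset.mem_union, Finset.mem_biUnion, Finset.mem_image,
      Finset.mem_univ, true_and] at he
    rcases he with ⟨u, f, hf, rfl⟩ | ⟨v, f, hf, rfl⟩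
    · rw [Finset.sum_image (fun a _ b _ hab => by simpa using hab)]
      exact h₂ u f hf
    · rw [Finset.sum_image (fun a _ b _ hab => by simpa using hab)]
      exact h₁ v f hf

lemma card_prodKer {m n₁ n₂ : ℕ} [Fact m.Prime] (G₁ : HG m (Fin n₁)) (G₂ : HG m (Fin n₂)) :
    Nat.card {x : Fin n₁ × Fin n₂ → ZMod m // (cartProd G₁ G₂).inc.mulVec x = 0}
      = Nat.card {y : Fin n₁ → ZMod m // G₁.inc.mulVec y = 0}
          ^ Module.finrank (ZMod m) (LinearMap.ker G₂.inc.mulVecLin) := by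
  classical
  set d₂ := Module.finrank (ZMod m) (LinearMap.ker G₂.inc.mulVecLin) with hd₂def
  let b : Module.Basis (Fin d₂) (ZMod m) (LinearMap.ker G₂.inc.mulVecLin) :=
    Module.finBasis (ZMod m) (LinearMap.ker G₂.inc.mulVecLin)
  -- Step 1: curry and package rows into K₂
  let E₁ : {x : Fin n₁ × Fin n₂ → ZMod m // (cartProd G₁ G₂).inc.mulVec x = 0} ≃
      {z : Fin n₁ → LinearMap.ker G₂.inc.mulVecLin // ∀ e ∈ G₁.edges, ∑ u ∈ e, z u = 0} :=
  { toFun := fun x =>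
      ⟨fun u => ⟨fun v => x.1 (u, v), by
          rw [LinearMap.mem_ker, Matrix.mulVecLin_apply, HG.mulVec_inc_eq_zero_iff]
          exact fun e he => ((prod_mulVec_eq_zero_iff G₁ G₂ x.1).1 x.2).1 u e he⟩, by
        intro e he
        have h1 := ((prod_mulVec_eq_zero_iff G₁ G₂ x.1).1 x.2).2
        apply Subtype.ext
        rw [AddSubmonoidClass.coe_finset_sum]
        funext v
        rw [Finset.sum_apply]
        exact h1 v e he⟩,
    invFun := fun z => ⟨fun p => (z.1 p.1).1 p.2, by
        rw [prod_mulVec_eq_zero_iff]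
        constructor
        · intro u e he
          have := (z.1 u).2
          rw [LinearMap.mem_ker, Matrix.mulVecLin_apply,
            HG.mulVec_inc_eq_zero_iff] at this
          exact this e he
        · intro v e he
          have := congrFun (congrArg Subtype.val (z.2 e he)) v
          rw [AddSubmonoidClass.coe_finset_sum, Finset.sum_apply] at this
          exact this⟩,
    left_inv := fun x => rfl,
    right_inv := fun z => rfl }
  -- Step 2: coordinates via a basis of K₂
  let E₂ : {z : Fin n₁ → LinearMap.ker G₂.inc.mulVecLin // ∀ e ∈ G₁.edges, ∑ u ∈ e, z u = 0} ≃
      {c : Fin n₁ → (Fin d₂ → ZMod m) // ∀ e ∈ G₁.edges, ∑ u ∈ e, c u = 0} :=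
    Equiv.subtypeEquiv (Equiv.piCongrRight fun _ => b.equivFun.toEquiv) (by
      intro z
      refine forall₂_congr fun e he => ?_
      show (∑ u ∈ e, z u = 0) ↔ (∑ u ∈ e, b.equivFun (z u) = 0)
      rw [← map_sum, LinearEquiv.map_eq_zero_iff])
  -- Step 3: flip coordinates
  let E₃ : {c : Fin n₁ → (Fin d₂ → ZMod m) // ∀ e ∈ G₁.edges, ∑ u ∈ e, c u = 0} ≃
      {d : Fin d₂ → (Fin n₁ → ZMod m) // ∀ j, ∀ e ∈ G₁.edges, ∑ u ∈ e, d j u = 0} :=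
    Equiv.subtypeEquiv (Equiv.piComm fun _ _ => ZMod m) (by
      intro c
      constructor
      · intro h j e he
        have := congrFun (h e he) j
        rwa [Finset.sum_apply] at this
      · intro h e he
        funext j
        rw [Finset.sum_apply]
        exact h j e he)
  -- Step 4: split off the product
  let E₄ : {d : Fin d₂ → (Fin n₁ → ZMod m) // ∀ j, ∀ e ∈ G₁.edges, ∑ u ∈ e, d j u = 0} ≃
      (Fin d₂ → {y : Fin n₁ → ZMod m // ∀ e ∈ G₁.edges, ∑ u ∈ e, y u = 0}) :=
    Equiv.subtypePiEquivPi (β := fun _ : Fin d₂ => Fin n₁ → ZMod m)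
      (p := fun _ y => ∀ e ∈ G₁.edges, ∑ u ∈ e, y u = 0)
  let E₅ : (Fin d₂ → {y : Fin n₁ → ZMod m // ∀ e ∈ G₁.edges, ∑ u ∈ e, y u = 0}) ≃
      (Fin d₂ → {y : Fin n₁ → ZMod m // G₁.inc.mulVec y = 0}) :=
    Equiv.piCongrRight fun _ =>
      Equiv.subtypeEquivRight fun y => (HG.mulVec_inc_eq_zero_iff G₁ y).symm
  rw [Nat.card_congr (((E₁.trans E₂).trans E₃).trans (E₄.trans E₅)), Nat.card_pi,
    Finset.prod_const, Finset.card_univ, Fintype.card_fin]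

end Aux

/-- **Prime case.** When `m` is prime and the incidence matrices of connected `m`-uniform
hypergraphs `G₁`, `G₂` have ranks `r₁`, `r₂` over the field `ZMod m`, the stabilizing
index of the Cartesian product is `s(G₁ □ G₂) = m^{(n₁-r₁)(n₂-r₂)-1}`. -/
theorem stabIndex_cartProd_prime (m n₁ n₂ r₁ r₂ : ℕ) (hp : m.Prime)
    (hn₁ : 2 ≤ n₁) (hn₂ : 2 ≤ n₂)
    (G₁ : HG m (Fin n₁)) (G₂ : HG m (Fin n₂))
    (h₁ : G₁.Connected) (h₂ : G₂.Connected)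
    (hr₁ : G₁.inc.rank = r₁) (hr₂ : G₂.inc.rank = r₂)
    (w : Fin n₁ × Fin n₂) :
    (cartProd G₁ G₂).stabIndex w = m ^ ((n₁ - r₁) * (n₂ - r₂) - 1) := by
  classical
  haveI : Fact m.Prime := ⟨hp⟩
  haveI : NeZero m := ⟨hp.pos.ne'⟩
  set d₁ := Module.finrank (ZMod m) (LinearMap.ker G₁.inc.mulVecLin) with hd₁def
  set d₂ := Module.finrank (ZMod m) (LinearMap.ker G₂.inc.mulVecLin) with hd₂def
  have hrk₁ : r₁ + d₁ = n₁ := by rw [← hr₁]; exact finrank_ker_mulVecLin G₁.inc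
  have hrk₂ : r₂ + d₂ = n₂ := by rw [← hr₂]; exact finrank_ker_mulVecLin G₂.inc
  -- the all-ones vector lies in each kernel and is nonzero
  have hone : (1 : ZMod m) ≠ 0 := one_ne_zero
  have hd₁pos : 0 < d₁ := by
    rw [hd₁def, Module.finrank_pos_iff]
    refine nontrivial_of_ne ⟨fun _ => 1, ?_⟩ 0 ?_
    · rw [LinearMap.mem_ker, Matrix.mulVecLin_apply]
      exact G₁.mulVec_inc_allones
    · intro hc
      have := congrFun (congrArg Subtype.val hc) ⟨0, by omega⟩
      exact hone this
  have hd₂pos : 0 < d₂ := by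
    rw [hd₂def, Module.finrank_pos_iff]
    refine nontrivial_of_ne ⟨fun _ => 1, ?_⟩ 0 ?_
    · rw [LinearMap.mem_ker, Matrix.mulVecLin_apply]
      exact G₂.mulVec_inc_allones
    · intro hc
      have := congrFun (congrArg Subtype.val hc) ⟨0, by omega⟩
      exact hone this
  -- the kernel of the product
  have hcard₁ : Nat.card {y : Fin n₁ → ZMod m // G₁.inc.mulVec y = 0} = m ^ d₁ := by
    rw [Nat.card_congr (Equiv.subtypeEquivRight
        (q := (· ∈ LinearMap.ker G₁.inc.mulVecLin)) fun y => by
      simp [LinearMap.mem_ker])]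
    exact card_module_eq_pow_finrank (LinearMap.ker G₁.inc.mulVecLin)
  have hcardKp : Nat.card (LinearMap.ker (cartProd G₁ G₂).inc.mulVecLin) = m ^ (d₁ * d₂) := by
    have : Nat.card (LinearMap.ker (cartProd G₁ G₂).inc.mulVecLin)
        = Nat.card {x : Fin n₁ × Fin n₂ → ZMod m // (cartProd G₁ G₂).inc.mulVec x = 0} := by
      refine Nat.card_congr (Equiv.subtypeEquivRight fun x => ?_)
      simp [LinearMap.mem_ker]
    rw [this, card_prodKer G₁ G₂, hcard₁, ← pow_mul]
  have hfinKp : Module.finrank (ZMod m)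
      (LinearMap.ker (cartProd G₁ G₂).inc.mulVecLin) = d₁ * d₂ := by
    have h := card_module_eq_pow_finrank (m := m)
      (LinearMap.ker (cartProd G₁ G₂).inc.mulVecLin)
    rw [hcardKp] at h
    exact (Nat.pow_right_injective hp.two_le h.symm)
  -- the evaluation map at w
  set ev : (LinearMap.ker (cartProd G₁ G₂).inc.mulVecLin) →ₗ[ZMod m] ZMod m :=
    (LinearMap.proj w).comp (LinearMap.ker (cartProd G₁ G₂).inc.mulVecLin).subtype with hevdef
  have hallones : (fun _ => (1 : ZMod m)) ∈ LinearMap.ker (cartProd G₁ G₂).inc.mulVecLin := by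
    rw [LinearMap.mem_ker, Matrix.mulVecLin_apply]
    exact (cartProd G₁ G₂).mulVec_inc_allones
  have hsurj : Function.Surjective ev := by
    intro c
    refine ⟨c • ⟨fun _ => 1, hallones⟩, ?_⟩
    show c * 1 = c
    rw [mul_one]
  have hrange : LinearMap.range ev = ⊤ := LinearMap.range_eq_top.mpr hsurj
  have hfinker : Module.finrank (ZMod m) (LinearMap.ker ev) = d₁ * d₂ - 1 := by
    have h := LinearMap.finrank_range_add_finrank_ker ev
    rw [hrange, finrank_top, Module.finrank_self, hfinKp] at h
    omega
  -- identify the stabilizing set with the kernel of ev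
  have hstab : (cartProd G₁ G₂).stabIndex w = Nat.card (LinearMap.ker ev) := by
    apply Nat.card_congr
    refine ⟨fun s => ⟨⟨s.1, by simpa [LinearMap.mem_ker] using s.2.1⟩, ?_⟩,
      fun t => ⟨t.1.1, ?_, ?_⟩, fun s => rfl, fun t => rfl⟩
    · show ev _ = 0
      exact s.2.2
    · have h1 : (cartProd G₁ G₂).inc.mulVecLin t.1.1 = 0 := LinearMap.mem_ker.mp t.1.2
      rwa [Matrix.mulVecLin_apply] at h1
    · have h2 := t.2
      exact h2
  rw [hstab, card_module_eq_pow_finrank (m := m) (LinearMap.ker ev), hfinker]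
  congr 1
  have e1 : n₁ - r₁ = d₁ := by omega
  have e2 : n₂ - r₂ = d₂ := by omega
  rw [e1, e2]
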